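/- Let p and q be distinct odd primes with q > p. Then the fault-tolerant metric dimension of the barycentric subdivision of the zero divisor graph of Z_{pq} is at least q - 1, i.e. fdim(BS(Γ(Z_{pq}))) ≥ q - 1. -/

import Mathlib

open SimpleGraph

/-- Vertices of the zero divisor graph of `ZMod n`: nonzero zero divisors. -/
def ZDVertex (n : ℕ) : Type :=
  {x : ZMod n // x ≠ 0 ∧ ∃ y : ZMod n, y ≠ 0 ∧ x * y = 0}

/-- The zero divisor graph of `ZMod n`. -/
def zdGraph (n : ℕ) : SimpleGraph (ZDVertex n) where
  Adj a b := a ≠ b ∧ a.1 * b.1 = 0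
  symm := by
    constructor
    rintro a b ⟨hne, h⟩
    exact ⟨hne.symm, by rwa [mul_comm]⟩
  loopless := by
    constructor
    rintro a ⟨hne, -⟩
    exact hne rfl

/-- Vertex type of the barycentric subdivision: original vertices plus one
vertex for each edge. -/
def BSVertex {V : Type*} (G : SimpleGraph V) : Type _ := V ⊕ G.edgeSet

/-- The barycentric subdivision of a simple graph: each edge `uv` is replaced
by a path `u – w_{uv} – v` through the new vertex corresponding to the edge. -/
def BS {V : Type*} (G : SimpleGraph V) : SimpleGraph (BSVertex G) where
  Adj x y :=
    (∃ (v : V) (e : G.edgeSet), x = Sum.inl v ∧ y = Sum.inr e ∧ v ∈ (e : Sym2 V)) ∨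
    (∃ (v : V) (e : G.edgeSet), x = Sum.inr e ∧ y = Sum.inl v ∧ v ∈ (e : Sym2 V))
  symm := by
    constructor
    rintro x y (⟨v, e, rfl, rfl, h⟩ | ⟨v, e, rfl, rfl, h⟩)
    · exact Or.inr ⟨v, e, rfl, rfl, h⟩
    · exact Or.inl ⟨v, e, rfl, rfl, h⟩
  loopless := by
    constructor
    rintro x (⟨v, e, rfl, h, -⟩ | ⟨v, e, rfl, h, -⟩) <;> simp at h

/-- `W` is a resolving set for `G`. -/
def IsResolving {V : Type*} (G : SimpleGraph V) (W : Set V) : Prop :=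
  ∀ x y : V, x ≠ y → ∃ w ∈ W, G.dist x w ≠ G.dist y w

/-- The metric dimension of `G`: minimum cardinality of a resolving set. -/
noncomputable def metricDim {V : Type*} (G : SimpleGraph V) : ℕ :=
  sInf {k : ℕ | ∃ W : Set V, IsResolving G W ∧ W.ncard = k}

/-- `W` is a metric basis of `G`: a resolving set of minimum cardinality. -/
def IsMetricBasis {V : Type*} (G : SimpleGraph V) (W : Set V) : Prop :=
  IsResolving G W ∧ W.ncard = metricDim G

/-- `W` is a fault-tolerant resolving set for `G`. -/
def IsFTResolving {V : Type*} (G : SimpleGraph V) (W : Set V) : Prop :=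
  IsResolving G W ∧ ∀ w ∈ W, IsResolving G (W \ {w})

/-- The fault-tolerant metric dimension of `G`. -/
noncomputable def ftMetricDim {V : Type*} (G : SimpleGraph V) : ℕ :=
  sInf {k : ℕ | ∃ W : Set V, IsFTResolving G W ∧ W.ncard = k}

/-- The set `U` of original vertices of `Γ(Z_{pq})`, viewed inside the
barycentric subdivision, that are nonzero multiples of `q` in `Z_{pq}`. -/
def USet (p q : ℕ) : Set (BSVertex (zdGraph (p * q))) :=
  {x | ∃ v : ZDVertex (p * q), x = Sum.inl v ∧
      ∃ k : ZMod (p * q), v.1 = (q : ZMod (p * q)) * k}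

/-- The set `A` of original vertices of `Γ(Z_{pq})`, viewed inside the
barycentric subdivision, that are nonzero multiples of `p` in `Z_{pq}`. -/
def ASet (p q : ℕ) : Set (BSVertex (zdGraph (p * q))) :=
  {x | ∃ v : ZDVertex (p * q), x = Sum.inl v ∧
      ∃ k : ZMod (p * q), v.1 = (p : ZMod (p * q)) * k}

section Helpers

variable {V V' : Type*} {G : SimpleGraph V} {G' : SimpleGraph V'}

lemma BS_adj (x y : BSVertex G) :
    (BS G).Adj x y ↔
      (∃ (v : V) (e : G.edgeSet), x = Sum.inl v ∧ y = Sum.inr e ∧ v ∈ (e : Sym2 V)) ∨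
      (∃ (v : V) (e : G.edgeSet), x = Sum.inr e ∧ y = Sum.inl v ∧ v ∈ (e : Sym2 V)) := Iff.rfl

lemma BS_adj_inl_inr (v : V) (e : G.edgeSet) :
    (BS G).Adj (Sum.inl v) (Sum.inr e) ↔ v ∈ (e : Sym2 V) := by
  refine (BS_adj (G := G) _ _).trans ?_
  constructor
  · rintro (⟨v', e', h1, h2, h3⟩ | ⟨v', e', h1, h2, h3⟩)
    · cases Sum.inl.inj h1; cases Sum.inr.inj h2; exact h3
    · exact absurd h1 (by simp)
  · intro h; exact Or.inl ⟨v, e, rfl, rfl, h⟩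

lemma BS_adj_inr_inl (v : V) (e : G.edgeSet) :
    (BS G).Adj (Sum.inr e) (Sum.inl v) ↔ v ∈ (e : Sym2 V) :=
  ⟨fun h => (BS_adj_inl_inr v e).mp h.symm, fun h => ((BS_adj_inl_inr v e).mpr h).symm⟩

lemma BS_not_adj_inl_inl (u v : V) : ¬ (BS G).Adj (Sum.inl u) (Sum.inl v) := by
  refine mt (BS_adj (G := G) _ _).mp ?_
  rintro (⟨v', e', h1, h2, h3⟩ | ⟨v', e', h1, h2, h3⟩) <;> simp_all

lemma BS_not_adj_inr_inr (e e' : G.edgeSet) : ¬ (BS G).Adj (Sum.inr e) (Sum.inr e') := by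
  refine mt (BS_adj (G := G) _ _).mp ?_
  rintro (⟨v', e'', h1, h2, h3⟩ | ⟨v', e'', h1, h2, h3⟩) <;> simp_all

lemma iso_dist_le (f : G ≃g G') (x y : V) : G'.dist (f x) (f y) ≤ G.dist x y := by
  by_cases h : G.Reachable x y
  · obtain ⟨w, hw⟩ := h.exists_walk_length_eq_dist
    have := SimpleGraph.dist_le (w.map f.toHom)
    rwa [SimpleGraph.Walk.length_map, hw] at this
  · have h' : ¬ G'.Reachable (f x) (f y) := fun hr => h ((Iso.reachable_iff (φ := f)).mp hr)
    rw [SimpleGraph.dist_eq_zero_of_not_reachable h,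
      SimpleGraph.dist_eq_zero_of_not_reachable h']

lemma iso_dist_eq (f : G ≃g G') (x y : V) : G'.dist (f x) (f y) = G.dist x y := by
  refine le_antisymm (iso_dist_le f x y) ?_
  have := iso_dist_le f.symm (f x) (f y)
  simpa using this

/-- An automorphism of `G` induces an automorphism of `BS G`. -/
def BSIso (f : G ≃g G) : BS G ≃g BS G where
  toEquiv := Equiv.sumCongr f.toEquiv f.mapEdgeSet
  map_rel_iff' := by
    intro x y
    have hmem : ∀ (v : V) (e : G.edgeSet),
        f v ∈ ((f.mapEdgeSet e : G.edgeSet) : Sym2 V) ↔ v ∈ (e : Sym2 V) := by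
      intro v e
      show f v ∈ Sym2.map _ (e : Sym2 V) ↔ v ∈ (e : Sym2 V)
      rw [Sym2.mem_map]
      constructor
      · rintro ⟨a, ha, hav⟩
        have : a = v := f.toEquiv.injective hav
        rwa [this] at ha
      · intro h; exact ⟨v, h, rfl⟩
    cases x with
    | inl u =>
      cases y with
      | inl v =>
        exact iff_of_false (BS_not_adj_inl_inl (f u) (f v)) (BS_not_adj_inl_inl u v)
      | inr e =>
        exact Iff.trans (BS_adj_inl_inr (f u) (f.mapEdgeSet e))
          (Iff.trans (hmem u e) (BS_adj_inl_inr u e).symm)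
    | inr e =>
      cases y with
      | inl v =>
        exact Iff.trans (BS_adj_inr_inl (f v) (f.mapEdgeSet e))
          (Iff.trans (hmem v e) (BS_adj_inr_inl v e).symm)
      | inr e' =>
        exact iff_of_false (BS_not_adj_inr_inr (f.mapEdgeSet e) (f.mapEdgeSet e'))
          (BS_not_adj_inr_inr e e')

@[simp] lemma BSIso_inl (f : G ≃g G) (v : V) : BSIso f (Sum.inl v) = Sum.inl (f v) := rfl

@[simp] lemma BSIso_inr (f : G ≃g G) (e : G.edgeSet) :
    BSIso f (Sum.inr e) = Sum.inr (f.mapEdgeSet e) := rfl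

lemma mapEdgeSet_coe (f : G ≃g G) (e : G.edgeSet) :
    ((f.mapEdgeSet e : G.edgeSet) : Sym2 V) = Sym2.map f (e : Sym2 V) := rfl

end Helpers

/-- Counting lemma. -/
lemma counting {V : Type*} [Finite V] {W : Set V} {m : ℕ} (hm : 2 ≤ m) (T : Fin m → Set V)
    (hdis : ∀ i j : Fin m, i ≠ j → Disjoint (T i) (T j))
    (h2 : ∀ i j : Fin m, i ≠ j → 2 ≤ (W ∩ (T i ∪ T j)).ncard) : m ≤ W.ncard := by
  classical
  have := Fintype.ofFinite V
  set f : Fin m → ℕ := fun i => (W ∩ T i).ncard with hf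
  have hsum : ∑ i, f i ≤ W.ncard := by
    have hdisj : ∀ i ∈ Finset.univ, ∀ j ∈ Finset.univ, i ≠ j →
        Disjoint ((W ∩ T i).toFinset) ((W ∩ T j).toFinset) := by
      intro i _ j _ hij
      rw [Set.disjoint_toFinset]
      exact Set.disjoint_of_subset Set.inter_subset_right Set.inter_subset_right (hdis i j hij)
    have hcard : (Finset.univ.biUnion (fun i => (W ∩ T i).toFinset)).card = ∑ i, f i := by
      rw [Finset.card_biUnion hdisj]
      exact Finset.sum_congr rfl fun i _ => (Set.ncard_eq_toFinset_card' _).symm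
    rw [← hcard, Set.ncard_eq_toFinset_card' W]
    apply Finset.card_le_card
    intro x hx
    simp only [Finset.mem_biUnion, Set.mem_toFinset] at hx ⊢
    obtain ⟨i, _, hxi, _⟩ := hx
    exact hxi
  by_cases hall : ∀ i, 1 ≤ f i
  · calc (m : ℕ) = ∑ _i : Fin m, 1 := by simp
      _ ≤ ∑ i, f i := Finset.sum_le_sum fun i _ => hall i
      _ ≤ W.ncard := hsum
  · push_neg at hall
    obtain ⟨i0, hi0⟩ := hall
    have h0 : W ∩ T i0 = ∅ := by
      have : f i0 = 0 := by omega
      rwa [hf, Set.ncard_eq_zero (Set.toFinite _)] at this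
    have h2' : ∀ j, j ≠ i0 → 2 ≤ f j := by
      intro j hj
      have hh := h2 j i0 hj
      rwa [Set.inter_union_distrib_left, h0, Set.union_empty] at hh
    calc m ≤ 2 * (m - 1) := by omega
      _ = ∑ _j ∈ Finset.univ.erase i0, 2 := by
          rw [Finset.sum_const, Finset.card_erase_of_mem (Finset.mem_univ _),
            Finset.card_univ, Fintype.card_fin, smul_eq_mul, mul_comm]
      _ ≤ ∑ j ∈ Finset.univ.erase i0, f j :=
          Finset.sum_le_sum fun j hj => h2' j (Finset.ne_of_mem_erase hj)
      _ ≤ ∑ j, f j := Finset.sum_le_sum_of_subset (Finset.subset_univ _)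
      _ ≤ W.ncard := hsum

section PQ

variable {p q : ℕ}

lemma hpq_pos (hp : p.Prime) (hq : q.Prime) : 0 < p * q :=
  Nat.mul_pos hp.pos hq.pos

lemma q_not_dvd_p (hp : p.Prime) (hq : q.Prime) (hne : p ≠ q) : ¬ q ∣ p :=
  fun h => hne ((Nat.prime_dvd_prime_iff_eq hq hp).mp h).symm

lemma p_not_dvd_q (hp : p.Prime) (hq : q.Prime) (hne : p ≠ q) : ¬ p ∣ q :=
  fun h => hne ((Nat.prime_dvd_prime_iff_eq hp hq).mp h)

/-- Key multiplication fact: for `0 < m < q`, `(p*m) * z = 0` in `ZMod (p*q)` iff `q ∣ z.val`. -/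
lemma key_mul (hp : p.Prime) (hq : q.Prime) {m : ℕ} (hm0 : 0 < m) (hmq : m < q)
    (z : ZMod (p * q)) : ((p * m : ℕ) : ZMod (p * q)) * z = 0 ↔ q ∣ z.val := by
  haveI : NeZero (p * q) := ⟨(hpq_pos hp hq).ne'⟩
  have hz : ((z.val : ℕ) : ZMod (p * q)) = z := ZMod.natCast_rightInverse z
  have heq : ((p * m : ℕ) : ZMod (p * q)) * z = (((p * m * z.val : ℕ) : ℕ) : ZMod (p * q)) := by
    conv_lhs => rw [← hz]
    rw [← Nat.cast_mul]
  rw [heq, ZMod.natCast_eq_zero_iff]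
  constructor
  · intro h
    have h' : p * q ∣ p * (m * z.val) := by rwa [← mul_assoc]
    have hq' : q ∣ m * z.val := (mul_dvd_mul_iff_left hp.pos.ne').mp h'
    rcases (Nat.Prime.dvd_mul hq).mp hq' with h1 | h2
    · exact absurd (Nat.le_of_dvd hm0 h1) (by omega)
    · exact h2
  · rintro ⟨t, ht⟩
    exact ⟨m * t, by rw [mul_assoc, ht]; ring⟩

lemma aval_lt (hp : p.Prime) {i : ℕ} (hiq : i < q) : p * i < p * q := by
  have := hp.pos
  exact Nat.mul_lt_mul_of_le_of_lt (le_refl p) hiq hp.pos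

lemma q_lt_n (hp : p.Prime) (hq : q.Prime) : q < p * q :=
  lt_mul_left hq.pos hp.one_lt

lemma p_lt_n (hp : p.Prime) (hq : q.Prime) : p < p * q :=
  lt_mul_right hp.pos hq.one_lt

lemma aval_ne_zero (hp : p.Prime) (hq : q.Prime) {i : ℕ} (hi0 : 0 < i) (hiq : i < q) :
    ((p * i : ℕ) : ZMod (p * q)) ≠ 0 := by
  rw [Ne, ZMod.natCast_eq_zero_iff]
  intro h
  have := Nat.le_of_dvd (Nat.mul_pos hp.pos hi0) h
  have := aval_lt hp (q := q) hiq
  omega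

lemma bval_ne_zero (hp : p.Prime) (hq : q.Prime) : ((q : ℕ) : ZMod (p * q)) ≠ 0 := by
  rw [Ne, ZMod.natCast_eq_zero_iff]
  intro h
  exact absurd (Nat.le_of_dvd hq.pos h) (by have := q_lt_n hp hq; omega)

lemma pval_ne_zero (hp : p.Prime) (hq : q.Prime) : ((p : ℕ) : ZMod (p * q)) ≠ 0 := by
  rw [Ne, ZMod.natCast_eq_zero_iff]
  intro h
  exact absurd (Nat.le_of_dvd hp.pos h) (by have := p_lt_n hp hq; omega)

lemma cast_mul_cast_eq_zero {x y : ℕ} (h : p * q ∣ x * y) :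
    ((x : ℕ) : ZMod (p * q)) * ((y : ℕ) : ZMod (p * q)) = 0 := by
  rw [← Nat.cast_mul, ZMod.natCast_eq_zero_iff]
  exact h

/-- The `i`-th vertex on the `A`-side (`p`-multiples); `0 < i < q`. -/
def pv (hp : p.Prime) (hq : q.Prime) {i : ℕ} (hi0 : 0 < i) (hiq : i < q) :
    ZDVertex (p * q) :=
  ⟨((p * i : ℕ) : ZMod (p * q)), aval_ne_zero hp hq hi0 hiq,
    ((q : ℕ) : ZMod (p * q)), bval_ne_zero hp hq,
    cast_mul_cast_eq_zero ⟨i, by ring⟩⟩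

/-- The vertex `q` on the `B`-side. -/
def bv (hp : p.Prime) (hq : q.Prime) : ZDVertex (p * q) :=
  ⟨((q : ℕ) : ZMod (p * q)), bval_ne_zero hp hq,
    ((p : ℕ) : ZMod (p * q)), pval_ne_zero hp hq,
    cast_mul_cast_eq_zero ⟨1, by ring⟩⟩

@[simp] lemma pv_val (hp : p.Prime) (hq : q.Prime) {i : ℕ} (hi0 : 0 < i) (hiq : i < q) :
    (pv hp hq hi0 hiq).1 = ((p * i : ℕ) : ZMod (p * q)) := rfl

@[simp] lemma bv_val (hp : p.Prime) (hq : q.Prime) :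
    (bv hp hq).1 = ((q : ℕ) : ZMod (p * q)) := rfl

lemma pv_ne_bv (hp : p.Prime) (hq : q.Prime) (hne : p ≠ q) {i : ℕ} (hi0 : 0 < i) (hiq : i < q) :
    pv hp hq hi0 hiq ≠ bv hp hq := by
  intro h
  have hv : ((p * i : ℕ) : ZMod (p * q)) = ((q : ℕ) : ZMod (p * q)) := congrArg Subtype.val h
  have := congrArg ZMod.val hv
  rw [ZMod.val_cast_of_lt (aval_lt hp hiq), ZMod.val_cast_of_lt (q_lt_n hp hq)] at this
  exact p_not_dvd_q hp hq hne ⟨i, this.symm⟩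

lemma pv_inj (hp : p.Prime) (hq : q.Prime) {i j : ℕ} (hi0 : 0 < i) (hiq : i < q)
    (hj0 : 0 < j) (hjq : j < q) (h : pv hp hq hi0 hiq = pv hp hq hj0 hjq) : i = j := by
  have hv : ((p * i : ℕ) : ZMod (p * q)) = ((p * j : ℕ) : ZMod (p * q)) := congrArg Subtype.val h
  have := congrArg ZMod.val hv
  rw [ZMod.val_cast_of_lt (aval_lt hp hiq), ZMod.val_cast_of_lt (aval_lt hp hjq)] at this
  exact Nat.eq_of_mul_eq_mul_left hp.pos this

lemma pv_adj_bv (hp : p.Prime) (hq : q.Prime) (hne : p ≠ q) {i : ℕ} (hi0 : 0 < i) (hiq : i < q) :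
    (zdGraph (p * q)).Adj (pv hp hq hi0 hiq) (bv hp hq) :=
  ⟨pv_ne_bv hp hq hne hi0 hiq, cast_mul_cast_eq_zero ⟨i, by ring⟩⟩

lemma pv_not_adj_pv (hp : p.Prime) (hq : q.Prime) (hne : p ≠ q) {i j : ℕ} (hi0 : 0 < i)
    (hiq : i < q) (hj0 : 0 < j) (hjq : j < q) :
    ¬ (zdGraph (p * q)).Adj (pv hp hq hi0 hiq) (pv hp hq hj0 hjq) := by
  rintro ⟨-, hmul⟩
  rw [pv_val, pv_val, key_mul hp hq hi0 hiq, ZMod.val_cast_of_lt (aval_lt hp hjq)] at hmul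
  rcases (Nat.Prime.dvd_mul hq).mp hmul with h1 | h2
  · exact q_not_dvd_p hp hq hne h1
  · exact absurd (Nat.le_of_dvd hj0 h2) (by omega)

/-- The edge between `pv i` and `bv`, as an element of the edge set. -/
def ev (hp : p.Prime) (hq : q.Prime) (hne : p ≠ q) {i : ℕ} (hi0 : 0 < i) (hiq : i < q) :
    (zdGraph (p * q)).edgeSet :=
  ⟨s(pv hp hq hi0 hiq, bv hp hq), pv_adj_bv hp hq hne hi0 hiq⟩

/-- Every vertex of the zero divisor graph is a multiple of `p` or of `q`. -/
lemma classify (hp : p.Prime) (hq : q.Prime) (v : ZDVertex (p * q)) :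
    p ∣ v.1.val ∨ q ∣ v.1.val := by
  haveI : NeZero (p * q) := ⟨(hpq_pos hp hq).ne'⟩
  by_contra h
  push_neg at h
  obtain ⟨h1, h2⟩ := h
  have hcop : Nat.Coprime v.1.val (p * q) :=
    Nat.Coprime.mul_right ((Nat.Prime.coprime_iff_not_dvd hp).mpr h1).symm
      ((Nat.Prime.coprime_iff_not_dvd hq).mpr h2).symm
  have hunit : IsUnit v.1 := by
    have := (ZMod.isUnit_iff_coprime v.1.val (p * q)).mpr hcop
    rwa [ZMod.natCast_rightInverse v.1] at this
  obtain ⟨-, y, hy0, hxy⟩ := v.2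
  exact hy0 ((hunit.mul_right_eq_zero).mp hxy)

/-- The swap automorphism of the zero divisor graph exchanging `pv i` and `pv j`. -/
noncomputable instance (n : ℕ) : DecidableEq (ZDVertex n) := Classical.decEq _

noncomputable def swapIso (hp : p.Prime) (hq : q.Prime) {i j : ℕ} (hi0 : 0 < i) (hiq : i < q)
    (hj0 : 0 < j) (hjq : j < q) : zdGraph (p * q) ≃g zdGraph (p * q) := by
  refine ⟨Equiv.swap (pv hp hq hi0 hiq) (pv hp hq hj0 hjq), ?_⟩
  have hmul : ∀ x z : ZDVertex (p * q),
      ((Equiv.swap (pv hp hq hi0 hiq) (pv hp hq hj0 hjq)) x).1 * z.1 = 0 ↔ x.1 * z.1 = 0 := by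
    intro x z
    by_cases hxi : x = pv hp hq hi0 hiq
    · subst hxi
      rw [Equiv.swap_apply_left, pv_val, pv_val, key_mul hp hq hj0 hjq, key_mul hp hq hi0 hiq]
    · by_cases hxj : x = pv hp hq hj0 hjq
      · subst hxj
        rw [Equiv.swap_apply_right, pv_val, pv_val, key_mul hp hq hi0 hiq, key_mul hp hq hj0 hjq]
      · rw [Equiv.swap_apply_of_ne_of_ne hxi hxj]
  intro x y
  constructor
  · rintro ⟨hne', hmul'⟩
    refine ⟨fun h => hne' (congrArg _ h), ?_⟩
    have h1 : x.1 * ((Equiv.swap (pv hp hq hi0 hiq) (pv hp hq hj0 hjq)) y).1 = 0 :=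
      (hmul x _).mp hmul'
    rw [mul_comm (x.1) _] at h1
    have h2 : y.1 * x.1 = 0 := (hmul y _).mp h1
    rwa [mul_comm (y.1) _] at h2
  · rintro ⟨hne', hmul'⟩
    refine ⟨fun h => hne' ((Equiv.swap _ _).injective h), ?_⟩
    rw [hmul]
    have h1 : y.1 * x.1 = 0 := by rwa [mul_comm (x.1) (y.1)] at hmul'
    have h2 := (hmul y x).mpr h1
    rwa [mul_comm _ (x.1)] at h2

lemma swapIso_apply (hp : p.Prime) (hq : q.Prime) {i j : ℕ} (hi0 : 0 < i) (hiq : i < q)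
    (hj0 : 0 < j) (hjq : j < q) (x : ZDVertex (p * q)) :
    swapIso hp hq hi0 hiq hj0 hjq x =
      Equiv.swap (pv hp hq hi0 hiq) (pv hp hq hj0 hjq) x := rfl

end PQ

section MainPart

variable {p q : ℕ}

/-- The "bag" of vertices of the barycentric subdivision associated to `pv i`:
the vertex itself together with all edge-vertices incident to it. -/
def TSet (hp : p.Prime) (hq : q.Prime) {i : ℕ} (hi0 : 0 < i) (hiq : i < q) :
    Set (BSVertex (zdGraph (p * q))) :=
  {x | x = Sum.inl (pv hp hq hi0 hiq) ∨
    ∃ e : (zdGraph (p * q)).edgeSet, x = Sum.inr e ∧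
      pv hp hq hi0 hiq ∈ (e : Sym2 (ZDVertex (p * q)))}

lemma TSet_mem (hp : p.Prime) (hq : q.Prime) {i : ℕ} (hi0 : 0 < i) (hiq : i < q)
    (x : BSVertex (zdGraph (p * q))) :
    x ∈ TSet hp hq hi0 hiq ↔ (x = Sum.inl (pv hp hq hi0 hiq) ∨
      ∃ e : (zdGraph (p * q)).edgeSet, x = Sum.inr e ∧
        pv hp hq hi0 hiq ∈ (e : Sym2 (ZDVertex (p * q)))) := Iff.rfl

lemma BS_preconnected (hp : p.Prime) (hq : q.Prime) (hne : p ≠ q) :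
    (BS (zdGraph (p * q))).Preconnected := by
  haveI : NeZero (p * q) := ⟨(hpq_pos hp hq).ne'⟩
  have h1q : 1 < q := hq.one_lt
  have hadj : ∀ u v : ZDVertex (p * q), (zdGraph (p * q)).Adj u v →
      (BS (zdGraph (p * q))).Reachable (Sum.inl u) (Sum.inl v) := by
    intro u v h
    have he : s(u, v) ∈ (zdGraph (p * q)).edgeSet := (SimpleGraph.mem_edgeSet _).mpr h
    exact ((BS_adj_inl_inr u ⟨s(u, v), he⟩).mpr (Sym2.mem_mk_left u v)).reachable.trans
      ((BS_adj_inr_inl v ⟨s(u, v), he⟩).mpr (Sym2.mem_mk_right u v)).reachable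
  have hadjvb : ∀ v : ZDVertex (p * q), p ∣ v.1.val → (zdGraph (p * q)).Adj v (bv hp hq) := by
    rintro v ⟨s, hs⟩
    constructor
    · intro h
      have hval : v.1.val = q := by
        rw [congrArg Subtype.val h, bv_val, ZMod.val_cast_of_lt (q_lt_n hp hq)]
      exact p_not_dvd_q hp hq hne ⟨s, by rw [← hval]; exact hs⟩
    · have hz : ((v.1.val : ℕ) : ZMod (p * q)) = v.1 := ZMod.natCast_rightInverse v.1
      rw [← hz, bv_val]
      exact cast_mul_cast_eq_zero ⟨s, by rw [hs]; ring⟩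
  have hadjva : ∀ v : ZDVertex (p * q), q ∣ v.1.val →
      (zdGraph (p * q)).Adj v (pv hp hq one_pos h1q) := by
    rintro v ⟨s, hs⟩
    constructor
    · intro h
      have hval : v.1.val = p * 1 := by
        rw [congrArg Subtype.val h, pv_val, ZMod.val_cast_of_lt (aval_lt hp h1q)]
      rw [hval, mul_one] at hs
      exact q_not_dvd_p hp hq hne ⟨s, hs⟩
    · have hz : ((v.1.val : ℕ) : ZMod (p * q)) = v.1 := ZMod.natCast_rightInverse v.1
      rw [← hz, pv_val]
      exact cast_mul_cast_eq_zero ⟨s * 1, by rw [hs]; ring⟩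
  have hbv : ∀ v : ZDVertex (p * q),
      (BS (zdGraph (p * q))).Reachable (Sum.inl (bv hp hq)) (Sum.inl v) := by
    intro v
    rcases classify hp hq v with hpd | hqd
    · exact hadj _ _ (hadjvb v hpd).symm
    · exact (hadj _ _ (pv_adj_bv hp hq hne one_pos h1q).symm).trans
        (hadj _ _ (hadjva v hqd).symm)
  have hall : ∀ x : BSVertex (zdGraph (p * q)),
      (BS (zdGraph (p * q))).Reachable (Sum.inl (bv hp hq)) x := by
    intro x
    cases x with
    | inl v => exact hbv v
    | inr ee =>
      obtain ⟨e, he⟩ := ee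
      revert he
      refine Sym2.ind (fun u v => ?_) e
      intro he
      exact (hbv u).trans ((BS_adj_inl_inr u ⟨s(u, v), he⟩).mpr (Sym2.mem_mk_left u v)).reachable
  intro x y
  exact (hall x).symm.trans (hall y)

lemma univ_FT (hp : p.Prime) (hq : q.Prime) (hne : p ≠ q) :
    IsFTResolving (BS (zdGraph (p * q))) Set.univ := by
  have hc := BS_preconnected hp hq hne
  constructor
  · intro x y hxy
    refine ⟨x, Set.mem_univ x, ?_⟩
    rw [SimpleGraph.dist_self]
    intro h0
    exact hxy (((hc y x).dist_eq_zero_iff).mp h0.symm).symm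
  · intro w _ x y hxy
    by_cases hxw : x = w
    · have hyw : y ≠ w := fun h => hxy (hxw.trans h.symm)
      refine ⟨y, ⟨Set.mem_univ y, by simp [hyw]⟩, ?_⟩
      rw [SimpleGraph.dist_self]
      intro h0
      exact hxy ((hc x y).dist_eq_zero_iff.mp h0)
    · refine ⟨x, ⟨Set.mem_univ x, by simp [hxw]⟩, ?_⟩
      rw [SimpleGraph.dist_self]
      intro h0
      exact hxy (((hc y x).dist_eq_zero_iff).mp h0.symm).symm

lemma FT_bound (hp : p.Prime) (hq : q.Prime) (hne : p ≠ q) (hpq : p < q)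
    {W : Set (BSVertex (zdGraph (p * q)))} (hW : IsFTResolving (BS (zdGraph (p * q))) W) :
    q - 1 ≤ W.ncard := by
  haveI : NeZero (p * q) := ⟨(hpq_pos hp hq).ne'⟩
  haveI hfin1 : Finite (ZDVertex (p * q)) := by unfold ZDVertex; infer_instance
  haveI hfin2 : Finite (BSVertex (zdGraph (p * q))) := by unfold BSVertex; infer_instance
  have h3 : 3 ≤ q := by have := hp.two_le; omega
  have hidx : ∀ i : Fin (q - 1), 0 < (i : ℕ) + 1 ∧ (i : ℕ) + 1 < q :=
    fun i => ⟨Nat.succ_pos _, by have := i.2; omega⟩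
  have hAinj : ∀ i j : Fin (q - 1),
      pv hp hq (hidx i).1 (hidx i).2 = pv hp hq (hidx j).1 (hidx j).2 → i = j := by
    intro i j h
    have := pv_inj hp hq (hidx i).1 (hidx i).2 (hidx j).1 (hidx j).2 h
    exact Fin.ext (by omega)
  refine counting (by omega) (fun i => TSet hp hq (hidx i).1 (hidx i).2) ?_ ?_
  · -- disjointness
    intro i j hij
    rw [Set.disjoint_left]
    intro x hxi hxj
    rw [TSet_mem] at hxi hxj
    rcases hxi with hxi | ⟨e1, hxe1, hm1⟩
    · rcases hxj with hxj | ⟨e2, hxe2, hm2⟩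
      · rw [hxi] at hxj
        exact hij (hAinj i j (Sum.inl.inj hxj))
      · rw [hxi] at hxe2
        simp at hxe2
    · rcases hxj with hxj | ⟨e2, hxe2, hm2⟩
      · rw [hxj] at hxe1
        simp at hxe1
      · rw [hxe1] at hxe2
        have he12 : e1 = e2 := Sum.inr.inj hxe2
        rw [← he12] at hm2
        have hAij : pv hp hq (hidx i).1 (hidx i).2 ≠ pv hp hq (hidx j).1 (hidx j).2 :=
          fun h => hij (hAinj i j h)
        have heq : (e1 : Sym2 (ZDVertex (p * q))) =
            s(pv hp hq (hidx i).1 (hidx i).2, pv hp hq (hidx j).1 (hidx j).2) :=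
          Sym2.eq_of_ne_mem hAij hm1 hm2 (Sym2.mem_mk_left _ _) (Sym2.mem_mk_right _ _)
        have hadj := e1.2
        rw [heq, SimpleGraph.mem_edgeSet] at hadj
        exact pv_not_adj_pv hp hq hne (hidx i).1 (hidx i).2 (hidx j).1 (hidx j).2 hadj
  · -- the two-witness bound
    intro i j hij
    have hAij : pv hp hq (hidx i).1 (hidx i).2 ≠ pv hp hq (hidx j).1 (hidx j).2 :=
      fun h => hij (hAinj i j h)
    set x : BSVertex (zdGraph (p * q)) := Sum.inr (ev hp hq hne (hidx i).1 (hidx i).2) with hxdef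
    set y : BSVertex (zdGraph (p * q)) := Sum.inr (ev hp hq hne (hidx j).1 (hidx j).2) with hydef
    have hxy : x ≠ y := by
      intro h
      have h2 : s(pv hp hq (hidx i).1 (hidx i).2, bv hp hq) =
          s(pv hp hq (hidx j).1 (hidx j).2, bv hp hq) :=
        congrArg Subtype.val (Sum.inr.inj h)
      have hmem : pv hp hq (hidx i).1 (hidx i).2 ∈
          s(pv hp hq (hidx j).1 (hidx j).2, bv hp hq) := by
        rw [← h2]
        exact Sym2.mem_mk_left _ _
      rcases Sym2.mem_iff.mp hmem with h' | h'
      · exact hAij h'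
      · exact pv_ne_bv hp hq hne (hidx i).1 (hidx i).2 h'
    set σ := swapIso hp hq (hidx i).1 (hidx i).2 (hidx j).1 (hidx j).2 with hσdef
    set F := BSIso σ with hFdef
    have hσb : σ (bv hp hq) = bv hp hq := by
      rw [hσdef, swapIso_apply]
      exact Equiv.swap_apply_of_ne_of_ne (pv_ne_bv hp hq hne (hidx i).1 (hidx i).2).symm
        (pv_ne_bv hp hq hne (hidx j).1 (hidx j).2).symm
    have hσi : σ (pv hp hq (hidx i).1 (hidx i).2) = pv hp hq (hidx j).1 (hidx j).2 := by
      rw [hσdef, swapIso_apply]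
      exact Equiv.swap_apply_left _ _
    have hFx : F x = y := by
      rw [hxdef, hydef, hFdef, BSIso_inr]
      congr 1
      apply Subtype.ext
      rw [mapEdgeSet_coe]
      show Sym2.map σ s(pv hp hq (hidx i).1 (hidx i).2, bv hp hq) =
        s(pv hp hq (hidx j).1 (hidx j).2, bv hp hq)
      rw [Sym2.map_pair_eq, hσi, hσb]
    have hfix : ∀ z : BSVertex (zdGraph (p * q)),
        z ∉ TSet hp hq (hidx i).1 (hidx i).2 ∪ TSet hp hq (hidx j).1 (hidx j).2 → F z = z := by
      intro z hz
      have hz1 : z ≠ Sum.inl (pv hp hq (hidx i).1 (hidx i).2) :=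
        fun h => hz (Set.mem_union_left _ (Or.inl h))
      have hz2 : ∀ e : (zdGraph (p * q)).edgeSet, z = Sum.inr e →
          pv hp hq (hidx i).1 (hidx i).2 ∉ (e : Sym2 (ZDVertex (p * q))) :=
        fun e he hm => hz (Set.mem_union_left _ (Or.inr ⟨e, he, hm⟩))
      have hz3 : z ≠ Sum.inl (pv hp hq (hidx j).1 (hidx j).2) :=
        fun h => hz (Set.mem_union_right _ (Or.inl h))
      have hz4 : ∀ e : (zdGraph (p * q)).edgeSet, z = Sum.inr e →
          pv hp hq (hidx j).1 (hidx j).2 ∉ (e : Sym2 (ZDVertex (p * q))) :=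
        fun e he hm => hz (Set.mem_union_right _ (Or.inr ⟨e, he, hm⟩))
      cases z with
      | inl v =>
        rw [hFdef, BSIso_inl]
        congr 1
        rw [hσdef, swapIso_apply]
        exact Equiv.swap_apply_of_ne_of_ne (fun h => hz1 (by rw [h]))
          (fun h => hz3 (by rw [h]))
      | inr ee =>
        have hmapfix : ∀ s : Sym2 (ZDVertex (p * q)),
            pv hp hq (hidx i).1 (hidx i).2 ∉ s → pv hp hq (hidx j).1 (hidx j).2 ∉ s →
            Sym2.map (⇑σ) s = s := by
          refine Sym2.ind (fun u v => ?_)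
          intro hmi hmj
          have hu : σ u = u := by
            rw [hσdef, swapIso_apply]
            exact Equiv.swap_apply_of_ne_of_ne
              (fun h => hmi (h ▸ Sym2.mem_mk_left u v))
              (fun h => hmj (h ▸ Sym2.mem_mk_left u v))
          have hv : σ v = v := by
            rw [hσdef, swapIso_apply]
            exact Equiv.swap_apply_of_ne_of_ne
              (fun h => hmi (h ▸ Sym2.mem_mk_right u v))
              (fun h => hmj (h ▸ Sym2.mem_mk_right u v))
          rw [Sym2.map_pair_eq, hu, hv]
        rw [hFdef, BSIso_inr]
        congr 1
        apply Subtype.ext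
        rw [mapEdgeSet_coe]
        exact hmapfix (ee : Sym2 (ZDVertex (p * q))) (hz2 ee rfl) (hz4 ee rfl)
    have hdist : ∀ z : BSVertex (zdGraph (p * q)),
        z ∉ TSet hp hq (hidx i).1 (hidx i).2 ∪ TSet hp hq (hidx j).1 (hidx j).2 →
        (BS (zdGraph (p * q))).dist x z = (BS (zdGraph (p * q))).dist y z := by
      intro z hz
      have h1 := iso_dist_eq F x z
      rw [hFx, hfix z hz] at h1
      exact h1.symm
    obtain ⟨w1, hw1W, hd1⟩ := hW.1 x y hxy
    obtain ⟨w2, hw2m, hd2⟩ := hW.2 w1 hw1W x y hxy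
    have hw2W : w2 ∈ W := hw2m.1
    have hw12 : w2 ≠ w1 := by
      intro h
      exact hw2m.2 (by rw [h]; exact rfl)
    have hw1T : w1 ∈ TSet hp hq (hidx i).1 (hidx i).2 ∪ TSet hp hq (hidx j).1 (hidx j).2 := by
      by_contra h
      exact hd1 (hdist w1 h)
    have hw2T : w2 ∈ TSet hp hq (hidx i).1 (hidx i).2 ∪ TSet hp hq (hidx j).1 (hidx j).2 := by
      by_contra h
      exact hd2 (hdist w2 h)
    calc 2 = ({w1, w2} : Set (BSVertex (zdGraph (p * q)))).ncard :=
          (Set.ncard_pair (Ne.symm hw12)).symm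
      _ ≤ (W ∩ (TSet hp hq (hidx i).1 (hidx i).2 ∪ TSet hp hq (hidx j).1 (hidx j).2)).ncard := by
          apply Set.ncard_le_ncard ?_ (Set.toFinite _)
          rintro z hz
          rcases hz with rfl | hz
          · exact ⟨hw1W, hw1T⟩
          · rcases hz with rfl
            exact ⟨hw2W, hw2T⟩

end MainPart

theorem ftMetricDim_BS_zdGraph_ge_q_sub_one (p q : ℕ) (hp : p.Prime) (hq : q.Prime)
    (hpodd : Odd p) (hqodd : Odd q) (hne : p ≠ q) (hpq : q > p) :
    ftMetricDim (BS (zdGraph (p * q))) ≥ q - 1 := by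
  have hSne : ({k : ℕ | ∃ W : Set (BSVertex (zdGraph (p * q))),
      IsFTResolving (BS (zdGraph (p * q))) W ∧ W.ncard = k}).Nonempty :=
    ⟨(Set.univ : Set (BSVertex (zdGraph (p * q)))).ncard,
      Set.univ, univ_FT hp hq hne, rfl⟩
  obtain ⟨W, hWft, hWcard⟩ := Nat.sInf_mem hSne
  show q - 1 ≤ ftMetricDim (BS (zdGraph (p * q)))
  calc q - 1 ≤ W.ncard := FT_bound hp hq hne hpq hWft
    _ = ftMetricDim (BS (zdGraph (p * q))) := hWcard
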